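/- arXiv:2106.11568 — 6 statements merged into one kernel-verified Lean document; each statement's English description precedes it below -/
import Mathlib

section
/- Let n ≥ 1 and let R be a commutative ring. For any elements X₁,…,Xₙ and Y₁,…,Yₙ of R, the n×n determinant det_{1≤i,j≤n}( X_i^j − Y_i^j ) equals the joint antisymmetrization ∑_{σ ∈ S_n} sgn(σ) · ∏_{1 ≤ i ≤ j ≤ n} ( X_{σ(j)} − Y_{σ(i)} ), where S_n is the symmetric group on {1,…,n}. -/
open Finset Equiv Equiv.Perm Matrix

namespace Lemma61

variable {R : Type*} [CommRing R]

/-- Decomposition of a permutation of `Fin (n+1)` by its value at `Fin.last n`. -/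
def E (n : ℕ) : Fin (n + 1) × Equiv.Perm (Fin n) ≃ Equiv.Perm (Fin (n + 1)) :=
  ((finSuccEquivLast.prodCongr (Equiv.refl _)).trans Equiv.Perm.decomposeOption.symm).trans
    (Equiv.permCongr finSuccEquivLast.symm)

/-- The row embedding associated to `k`. -/
def hemb (n : ℕ) (k : Fin (n + 1)) (m : Fin n) : Fin (n + 1) :=
  finSuccEquivLast.symm (Equiv.swap none (finSuccEquivLast k) (some m))

lemma E_apply_last (n : ℕ) (k : Fin (n + 1)) (τ : Equiv.Perm (Fin n)) :
    E n (k, τ) (Fin.last n) = k := by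
  simp [E, Equiv.permCongr_apply]

lemma E_apply_castSucc (n : ℕ) (k : Fin (n + 1)) (τ : Equiv.Perm (Fin n)) (m : Fin n) :
    E n (k, τ) (Fin.castSucc m) = hemb n k (τ m) := by
  simp [E, hemb, Equiv.permCongr_apply]

lemma E_sign (n : ℕ) (k : Fin (n + 1)) (τ : Equiv.Perm (Fin n)) :
    Equiv.Perm.sign (E n (k, τ)) =
      Equiv.Perm.sign (Equiv.swap (none : Option (Fin n)) (finSuccEquivLast k)) *
        Equiv.Perm.sign τ := by
  simp [E, Equiv.Perm.sign_permCongr]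

/-- Adding a linear combination of other columns to a column does not change the determinant. -/
lemma det_updateCol_add_sum {N : ℕ} (A : Matrix (Fin N) (Fin N) R) (i : Fin N)
    (s : Finset (Fin N)) (hi : i ∉ s) (c : Fin N → R) :
    Matrix.det (A.updateCol i fun r => A r i + ∑ j ∈ s, c j * A r j) = Matrix.det A := by
  classical
  induction s using Finset.induction_on with
  | empty => simp
  | @insert a s ha ih =>
    have hia : i ≠ a := fun h => hi (h ▸ Finset.mem_insert_self a s)
    have his : i ∉ s := fun h => hi (Finset.mem_insert_of_mem h)
    set A' := A.updateCol i (fun r => A r i + ∑ j ∈ s, c j * A r j) with hA'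
    have h1 : (A.updateCol i fun r => A r i + ∑ j ∈ insert a s, c j * A r j) =
        A'.updateCol i (fun r => A' r i + c a • A' r a) := by
      ext r j
      by_cases hj : j = i
      · subst hj
        simp [A', Matrix.updateCol_self, Matrix.updateCol_ne hia.symm,
          Finset.sum_insert ha, smul_eq_mul]
        ring
      · simp [A', Matrix.updateCol_ne hj]
    rw [h1, Matrix.det_updateCol_add_smul_self A' hia (c a)]
    exact ih his

lemma Ici_last (n : ℕ) : Finset.Ici (Fin.last n) = {Fin.last n} := by
  ext j
  simp [Fin.last_le_iff, eq_comm]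

lemma Ici_castSucc (n : ℕ) (i : Fin n) :
    Finset.Ici (Fin.castSucc i) =
      insert (Fin.last n) ((Finset.Ici i).map Fin.castSuccEmb) := by
  ext j
  induction j using Fin.lastCases with
  | last => simp [Fin.le_last]
  | cast j =>
    have hne : Fin.castSucc j ≠ Fin.last n := (Fin.castSucc_lt_last j).ne
    simp only [Finset.mem_Ici, Finset.mem_insert, Finset.mem_map, Fin.coe_castSuccEmb]
    constructor
    · intro hij
      exact Or.inr ⟨j, Fin.castSucc_le_castSucc_iff.mp hij, rfl⟩
    · rintro (h | ⟨a, ha, he⟩)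
      · exact absurd h hne
      · have haj : a = j := Fin.castSucc_injective n he
        subst haj
        exact Fin.castSucc_le_castSucc_iff.mpr ha

lemma last_not_mem_map (n : ℕ) (s : Finset (Fin n)) :
    Fin.last n ∉ s.map Fin.castSuccEmb := by
  simp only [Finset.mem_map, Fin.coe_castSuccEmb]
  rintro ⟨m, -, hm⟩
  exact (Fin.castSucc_lt_last m).ne hm

/-- Splitting of the triangular double product. -/
lemma split (n : ℕ) (f : Fin (n + 1) → Fin (n + 1) → R) :
    ∏ i, ∏ j ∈ Finset.Ici i, f j i =
      (∏ i, f (Fin.last n) i) *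
        ∏ i : Fin n, ∏ j ∈ Finset.Ici i, f (Fin.castSucc j) (Fin.castSucc i) := by
  rw [Fin.prod_univ_castSucc (f := fun i => ∏ j ∈ Finset.Ici i, f j i)]
  rw [Fin.prod_univ_castSucc (f := fun i => f (Fin.last n) i)]
  rw [Ici_last, Finset.prod_singleton]
  have : ∀ i : Fin n, ∏ j ∈ Finset.Ici (Fin.castSucc i), f j (Fin.castSucc i) =
      f (Fin.last n) (Fin.castSucc i) *
        ∏ j ∈ Finset.Ici i, f (Fin.castSucc j) (Fin.castSucc i) := by
    intro i
    rw [Ici_castSucc, Finset.prod_insert (last_not_mem_map n _), Finset.prod_map]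
    simp only [Fin.coe_castSuccEmb]
  simp_rw [this]
  rw [Finset.prod_mul_distrib]
  ring

lemma poly_column (n : ℕ) (Y : Fin (n + 1) → R) (t u : R) :
    (∏ i, (Polynomial.X - Polynomial.C (Y i))).eval t -
        (∏ i, (Polynomial.X - Polynomial.C (Y i))).eval u =
      (t ^ (n + 1) - u ^ (n + 1)) +
        ∑ m : Fin n, (∏ i, (Polynomial.X - Polynomial.C (Y i))).coeff ((m : ℕ) + 1) *
          (t ^ ((m : ℕ) + 1) - u ^ ((m : ℕ) + 1)) := by
  set p : Polynomial R := ∏ i, (Polynomial.X - Polynomial.C (Y i)) with hp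
  have hmonic : p.Monic :=
    Polynomial.monic_prod_of_monic _ _ fun i _ => Polynomial.monic_X_sub_C _
  have hdegle : p.natDegree < n + 2 := by
    have h1 : p.natDegree ≤ ∑ i : Fin (n + 1), (Polynomial.X - Polynomial.C (Y i)).natDegree := by
      rw [hp]; exact Polynomial.natDegree_prod_le _ _
    have h2 : ∑ i : Fin (n + 1), (Polynomial.X - Polynomial.C (Y i)).natDegree ≤ n + 1 := by
      have h3 := Finset.sum_le_sum (s := (Finset.univ : Finset (Fin (n + 1))))
        (f := fun i : Fin (n + 1) => (Polynomial.X - Polynomial.C (Y i)).natDegree)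
        (g := fun _ => (1 : ℕ)) (fun i _ => Polynomial.natDegree_X_sub_C_le (Y i))
      simpa using h3
    omega
  have he : ∀ x : R, p.eval x = ∑ m ∈ Finset.range (n + 2), p.coeff m * x ^ m := fun x =>
    Polynomial.eval_eq_sum_range' hdegle x
  have hc : p.coeff (n + 1) = 1 := by
    nontriviality R
    have hdeg : p.natDegree = n + 1 := by
      rw [hp, Polynomial.natDegree_prod_of_monic _ _ fun i _ => Polynomial.monic_X_sub_C _]
      simp [Polynomial.natDegree_X_sub_C]
    have := hmonic.coeff_natDegree
    rwa [hdeg] at this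
  rw [he t, he u, ← Finset.sum_sub_distrib]
  simp_rw [← mul_sub]
  rw [Finset.sum_range_succ' (fun m => p.coeff m * (t ^ m - u ^ m)) (n + 1)]
  rw [Finset.sum_range_succ]
  rw [hc, Fin.sum_univ_eq_sum_range (fun m => p.coeff (m + 1) * (t ^ (m + 1) - u ^ (m + 1))) n]
  simp
  ring

theorem key (n : ℕ) (X Y : Fin n → R) :
    Matrix.det (Matrix.of fun i j : Fin n => X i ^ ((j : ℕ) + 1) - Y i ^ ((j : ℕ) + 1)) =
      ∑ σ : Equiv.Perm (Fin n),
        (Equiv.Perm.sign σ : ℤ) •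
          ∏ i : Fin n, ∏ j ∈ Finset.Ici i, (X (σ j) - Y (σ i)) := by
  induction n with
  | zero =>
    simp [Matrix.det_fin_zero]
  | succ n ih =>
    -- replace smul with mul everywhere
    have ih' : ∀ X Y : Fin n → R,
        Matrix.det (Matrix.of fun i j : Fin n => X i ^ ((j : ℕ) + 1) - Y i ^ ((j : ℕ) + 1)) =
          ∑ σ : Equiv.Perm (Fin n), ((Equiv.Perm.sign σ : ℤ) : R) *
            ∏ i : Fin n, ∏ j ∈ Finset.Ici i, (X (σ j) - Y (σ i)) := by
      intro X Y
      rw [ih X Y]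
      simp [zsmul_eq_mul]
    simp only [zsmul_eq_mul]
    set p : Polynomial R := ∏ i, (Polynomial.X - Polynomial.C (Y i)) with hp
    set A : Matrix (Fin (n + 1)) (Fin (n + 1)) R :=
      Matrix.of fun i j : Fin (n + 1) => X i ^ ((j : ℕ) + 1) - Y i ^ ((j : ℕ) + 1) with hA
    set B : Matrix (Fin (n + 1)) (Fin (n + 1)) R :=
      A.updateCol (Fin.last n) (fun r => p.eval (X r)) with hB
    have hYeval : ∀ r, p.eval (Y r) = 0 := by
      intro r
      rw [hp, Polynomial.eval_prod]
      refine Finset.prod_eq_zero (Finset.mem_univ r) ?_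
      simp
    have hXeval : ∀ r, p.eval (X r) = ∏ i, (X r - Y i) := by
      intro r
      rw [hp, Polynomial.eval_prod]
      simp
    -- Step 1: det A = det B
    have hAB : Matrix.det A = Matrix.det B := by
      have hlast : Fin.last n ∉ (Finset.univ : Finset (Fin n)).map Fin.castSuccEmb :=
        last_not_mem_map n _
      have h0 := det_updateCol_add_sum A (Fin.last n)
        ((Finset.univ : Finset (Fin n)).map Fin.castSuccEmb) hlast
        (fun j => p.coeff ((j : ℕ) + 1))
      have hcol : (fun r => Polynomial.eval (X r) p) =
          (fun r => A r (Fin.last n) +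
            ∑ j ∈ (Finset.univ : Finset (Fin n)).map Fin.castSuccEmb,
              p.coeff ((j : ℕ) + 1) * A r j) := by
        funext r
        rw [Finset.sum_map]
        have hpc := poly_column n Y (X r) (Y r)
        rw [hYeval r, sub_zero, ← hp] at hpc
        rw [hpc]
        simp [hA]
      rw [← h0, hB, hcol]
    -- Step 2: per-permutation product of B
    have hBprod : ∀ σ : Equiv.Perm (Fin (n + 1)),
        ∏ i, B (σ i) i =
          (∏ i, (X (σ (Fin.last n)) - Y i)) *
            ∏ m : Fin n, (X (σ (Fin.castSucc m)) ^ ((m : ℕ) + 1) -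
              Y (σ (Fin.castSucc m)) ^ ((m : ℕ) + 1)) := by
      intro σ
      rw [Fin.prod_univ_castSucc (f := fun i => B (σ i) i)]
      have h1 : B (σ (Fin.last n)) (Fin.last n) = ∏ i, (X (σ (Fin.last n)) - Y i) := by
        rw [hB, Matrix.updateCol_self, hXeval]
      have h2 : ∀ m : Fin n, B (σ (Fin.castSucc m)) (Fin.castSucc m) =
          X (σ (Fin.castSucc m)) ^ ((m : ℕ) + 1) - Y (σ (Fin.castSucc m)) ^ ((m : ℕ) + 1) := by
        intro m
        rw [hB, Matrix.updateCol_ne (Fin.castSucc_lt_last m).ne]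
        simp [hA, Fin.coe_castSucc]
      rw [h1]
      rw [show (∏ m : Fin n, B (σ (Fin.castSucc m)) (Fin.castSucc m)) =
          ∏ m : Fin n, (X (σ (Fin.castSucc m)) ^ ((m : ℕ) + 1) -
            Y (σ (Fin.castSucc m)) ^ ((m : ℕ) + 1)) from
        Finset.prod_congr rfl fun m _ => h2 m]
      ring
    -- Step 3: split the triangular product on the RHS
    have hsplit : ∀ σ : Equiv.Perm (Fin (n + 1)),
        ∏ i, ∏ j ∈ Finset.Ici i, (X (σ j) - Y (σ i)) =
          (∏ i, (X (σ (Fin.last n)) - Y i)) *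
            ∏ i : Fin n, ∏ j ∈ Finset.Ici i,
              (X (σ (Fin.castSucc j)) - Y (σ (Fin.castSucc i))) := by
      intro σ
      rw [split n (fun j i => X (σ j) - Y (σ i))]
      congr 1
      exact Equiv.prod_comp σ (fun i => X (σ (Fin.last n)) - Y i)
    -- Step 4: rewrite both sides as sums over the decomposition E
    rw [hAB, Matrix.det_apply']
    calc
      ∑ σ : Equiv.Perm (Fin (n + 1)), ((Equiv.Perm.sign σ : ℤ) : R) * ∏ i, B (σ i) i =
          ∑ σ : Equiv.Perm (Fin (n + 1)), ((Equiv.Perm.sign σ : ℤ) : R) *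
            ((∏ i, (X (σ (Fin.last n)) - Y i)) *
              ∏ m : Fin n, (X (σ (Fin.castSucc m)) ^ ((m : ℕ) + 1) -
                Y (σ (Fin.castSucc m)) ^ ((m : ℕ) + 1))) := by
        refine Finset.sum_congr rfl fun σ _ => ?_
        rw [hBprod σ]
      _ = ∑ σ : Equiv.Perm (Fin (n + 1)), ((Equiv.Perm.sign σ : ℤ) : R) *
            ((∏ i, (X (σ (Fin.last n)) - Y i)) *
              ∏ i : Fin n, ∏ j ∈ Finset.Ici i,
                (X (σ (Fin.castSucc j)) - Y (σ (Fin.castSucc i)))) := by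
        rw [← Equiv.sum_comp (E n) (fun σ : Equiv.Perm (Fin (n + 1)) =>
          ((Equiv.Perm.sign σ : ℤ) : R) *
            ((∏ i, (X (σ (Fin.last n)) - Y i)) *
              ∏ m : Fin n, (X (σ (Fin.castSucc m)) ^ ((m : ℕ) + 1) -
                Y (σ (Fin.castSucc m)) ^ ((m : ℕ) + 1))))]
        rw [← Equiv.sum_comp (E n) (fun σ : Equiv.Perm (Fin (n + 1)) =>
          ((Equiv.Perm.sign σ : ℤ) : R) *
            ((∏ i, (X (σ (Fin.last n)) - Y i)) *
              ∏ i : Fin n, ∏ j ∈ Finset.Ici i,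
                (X (σ (Fin.castSucc j)) - Y (σ (Fin.castSucc i)))))]
        rw [Fintype.sum_prod_type, Fintype.sum_prod_type]
        refine Finset.sum_congr rfl fun k _ => ?_
        simp only [E_apply_last, E_apply_castSucc, E_sign]
        have hin : ∑ τ : Equiv.Perm (Fin n), ((Equiv.Perm.sign τ : ℤ) : R) *
            ∏ m : Fin n, (X (hemb n k (τ m)) ^ ((m : ℕ) + 1) -
              Y (hemb n k (τ m)) ^ ((m : ℕ) + 1)) =
            ∑ τ : Equiv.Perm (Fin n), ((Equiv.Perm.sign τ : ℤ) : R) *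
              ∏ i : Fin n, ∏ j ∈ Finset.Ici i,
                (X (hemb n k (τ j)) - Y (hemb n k (τ i))) := by
          have h3 := ih' (fun m => X (hemb n k m)) (fun m => Y (hemb n k m))
          rw [Matrix.det_apply'] at h3
          simpa using h3
        set s : R := ((Equiv.Perm.sign
          (Equiv.swap (none : Option (Fin n)) (finSuccEquivLast k)) : ℤ) : R) with hs
        set CK : R := ∏ i, (X k - Y i) with hCK
        calc
          ∑ τ : Equiv.Perm (Fin n),
              ((↑(Equiv.Perm.sign (Equiv.swap (none : Option (Fin n)) (finSuccEquivLast k)) *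
                Equiv.Perm.sign τ) : ℤ) : R) *
              (CK * ∏ m : Fin n, (X (hemb n k (τ m)) ^ ((m : ℕ) + 1) -
                Y (hemb n k (τ m)) ^ ((m : ℕ) + 1))) =
              (s * CK) * ∑ τ : Equiv.Perm (Fin n), ((Equiv.Perm.sign τ : ℤ) : R) *
                ∏ m : Fin n, (X (hemb n k (τ m)) ^ ((m : ℕ) + 1) -
                  Y (hemb n k (τ m)) ^ ((m : ℕ) + 1)) := by
            rw [Finset.mul_sum]
            refine Finset.sum_congr rfl fun τ _ => ?_
            push_cast
            ring
          _ = (s * CK) * ∑ τ : Equiv.Perm (Fin n), ((Equiv.Perm.sign τ : ℤ) : R) *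
                ∏ i : Fin n, ∏ j ∈ Finset.Ici i,
                  (X (hemb n k (τ j)) - Y (hemb n k (τ i))) := by rw [hin]
          _ = ∑ τ : Equiv.Perm (Fin n),
              ((↑(Equiv.Perm.sign (Equiv.swap (none : Option (Fin n)) (finSuccEquivLast k)) *
                Equiv.Perm.sign τ) : ℤ) : R) *
              (CK * ∏ i : Fin n, ∏ j ∈ Finset.Ici i,
                (X (hemb n k (τ j)) - Y (hemb n k (τ i)))) := by
            rw [Finset.mul_sum]
            refine Finset.sum_congr rfl fun τ _ => ?_
            push_cast
            ring
      _ = ∑ σ : Equiv.Perm (Fin (n + 1)), ((Equiv.Perm.sign σ : ℤ) : R) *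
            ∏ i, ∏ j ∈ Finset.Ici i, (X (σ j) - Y (σ i)) := by
        refine Finset.sum_congr rfl fun σ _ => ?_
        rw [hsplit σ]

end Lemma61

/-- Lemma 6.1: det(X_i^j - Y_i^j) equals the joint antisymmetrization of
∏_{1 ≤ i ≤ j ≤ n} (X_j - Y_i). -/
theorem stmt0 {R : Type*} [CommRing R] (n : ℕ) (hn : 1 ≤ n) (X Y : Fin n → R) :
    Matrix.det (Matrix.of fun i j : Fin n => X i ^ ((j : ℕ) + 1) - Y i ^ ((j : ℕ) + 1)) =
      ∑ σ : Equiv.Perm (Fin n),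
        (Equiv.Perm.sign σ : ℤ) •
          ∏ i : Fin n, ∏ j ∈ Finset.Ici i, (X (σ j) - Y (σ i)) := by
  exact Lemma61.key n X Y
end

section
/- Let n ≥ 1, let K be a field, let u, v, w ∈ K, and let X₁,…,Xₙ be nonzero elements of K. Then ∑_{σ ∈ S_n} sgn(σ) · ∏_{1 ≤ p ≤ q ≤ n} ( u·X_{σ(q)} + v·X_{σ(p)}⁻¹ + w ) = det_{1≤i,j≤n}( (u·X_i + w)^j − (−v·X_i⁻¹)^j ). -/
open Finset Equiv Matrix

-- paste of earlier verified part
private def psi {n : ℕ} (k : Fin (n+1)) (e : Equiv.Perm (Fin n)) : Equiv.Perm (Fin (n+1)) :=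
  (Fin.cycleRange k)⁻¹ * Equiv.Perm.decomposeFin.symm (0, e)

private lemma psi_zero {n : ℕ} (k : Fin (n+1)) (e : Equiv.Perm (Fin n)) : psi k e 0 = k := by
  have h0 : Fin.cycleRange k k = 0 := Fin.cycleRange_self k
  simp only [psi, Equiv.Perm.mul_apply, Equiv.Perm.decomposeFin_symm_apply_zero]
  rw [← h0, Equiv.Perm.inv_def, Equiv.symm_apply_apply]

private lemma psi_succ {n : ℕ} (k : Fin (n+1)) (e : Equiv.Perm (Fin n)) (i : Fin n) :
    psi k e i.succ = k.succAbove (e i) := by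
  have h : Fin.cycleRange k (k.succAbove (e i)) = (e i).succ := Fin.cycleRange_succAbove k (e i)
  simp only [psi, Equiv.Perm.mul_apply, Equiv.Perm.decomposeFin_symm_apply_succ,
    Equiv.swap_self, Equiv.refl_apply]
  rw [← h, Equiv.Perm.inv_def, Equiv.symm_apply_apply]

private lemma psi_sign {n : ℕ} (k : Fin (n+1)) (e : Equiv.Perm (Fin n)) :
    (Equiv.Perm.sign (psi k e) : ℤ) = (-1)^(k:ℕ) * (Equiv.Perm.sign e : ℤ) := by
  simp [psi, Equiv.Perm.decomposeFin.symm_sign, Fin.sign_cycleRange]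

private lemma psi_bij {n : ℕ} :
    Function.Bijective (fun x : Fin (n+1) × Equiv.Perm (Fin n) => psi x.1 x.2) := by
  rw [Fintype.bijective_iff_injective_and_card]
  constructor
  · rintro ⟨k, e⟩ ⟨k', e'⟩ h
    simp only at h
    have hk : k = k' := by rw [← psi_zero k e, ← psi_zero k' e', h]
    subst hk
    have he : e = e' := Equiv.ext fun i => by
      have := congrArg (fun σ : Equiv.Perm (Fin (n+1)) => σ i.succ) h
      simp only [psi_succ] at this
      exact k.succAbove_right_injective this
    simp [he]
  · simp [Fintype.card_perm, Nat.factorial_succ]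

private lemma Ici_zero_univ {n : ℕ} : Finset.Ici (0 : Fin (n+1)) = Finset.univ := by
  ext x; simp [Fin.zero_le]

private lemma Ici_succ_map {n : ℕ} (p : Fin n) :
    Finset.Ici p.succ = (Finset.Ici p).map ⟨Fin.succ, Fin.succ_injective n⟩ := by
  ext q
  simp only [Finset.mem_Ici, Finset.mem_map, Function.Embedding.coeFn_mk]
  induction q using Fin.cases with
  | zero => simp [Fin.le_zero_iff, Fin.succ_ne_zero]
  | succ j => simp [Fin.succ_le_succ_iff, Fin.succ_inj]

private lemma key {R : Type*} [CommRing R] (n : ℕ) (A B : Fin n → R) :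
    ∑ σ : Equiv.Perm (Fin n), (Equiv.Perm.sign σ : ℤ) •
        ∏ p : Fin n, ∏ q ∈ Finset.Ici p, (A (σ q) - B (σ p)) =
      Matrix.det (Matrix.of fun i j : Fin n => A i ^ ((j:ℕ)+1) - B i ^ ((j:ℕ)+1)) := by
  induction n with
  | zero => simp
  | succ n IH =>
    nontriviality R
    -- abbreviations
    set N : Matrix (Fin (n+1)) (Fin (n+1)) R :=
      Matrix.of (fun i j : Fin (n+1) => A i ^ ((j:ℕ)+1) - B i ^ ((j:ℕ)+1)) with hN
    set M : Fin (n+1) → Matrix (Fin n) (Fin n) R := fun k =>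
      Matrix.of (fun i j : Fin n =>
        A (k.succAbove i) ^ ((j:ℕ)+1) - B (k.succAbove i) ^ ((j:ℕ)+1)) with hM
    set D : Fin (n+1) → R := fun k =>
      ∑ e : Equiv.Perm (Fin n), (Equiv.Perm.sign e : ℤ) •
        ∏ p : Fin n, ∏ q ∈ Finset.Ici p, (A (k.succAbove (e q)) - B (k.succAbove (e p))) with hD
    have hDM : ∀ k, D k = (M k).det := fun k =>
      IH (fun i => A (k.succAbove i)) (fun i => B (k.succAbove i))
    -- LHS
    have hL : (∑ σ : Equiv.Perm (Fin (n+1)), (Equiv.Perm.sign σ : ℤ) •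
          ∏ p : Fin (n+1), ∏ q ∈ Finset.Ici p, (A (σ q) - B (σ p)))
        = ∑ k : Fin (n+1), (-1 : R)^(k:ℕ) * ((∏ l, (A l - B k)) * D k) := by
      rw [← Fintype.sum_bijective _ psi_bij
        (fun x : Fin (n+1) × Equiv.Perm (Fin n) => (Equiv.Perm.sign (psi x.1 x.2) : ℤ) •
          ∏ p : Fin (n+1), ∏ q ∈ Finset.Ici p, (A (psi x.1 x.2 q) - B (psi x.1 x.2 p)))
        _ (fun x => rfl)]
      rw [Fintype.sum_prod_type]
      refine Finset.sum_congr rfl fun k _ => ?_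
      have hterm : ∀ e : Equiv.Perm (Fin n),
          (∏ p : Fin (n+1), ∏ q ∈ Finset.Ici p, (A (psi k e q) - B (psi k e p)))
          = (∏ l, (A l - B k)) * ∏ p : Fin n, ∏ q ∈ Finset.Ici p,
              (A (k.succAbove (e q)) - B (k.succAbove (e p))) := by
        intro e
        rw [Fin.prod_univ_succ]
        congr 1
        · rw [psi_zero, Ici_zero_univ]
          exact Equiv.prod_comp (psi k e) (fun l => A l - B k)
        · refine Finset.prod_congr rfl fun p _ => ?_
          rw [Ici_succ_map, Finset.prod_map]
          simp only [Function.Embedding.coeFn_mk, psi_succ]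
      simp only [hterm, psi_sign, hD]
      rw [Finset.mul_sum, Finset.mul_sum]
      refine Finset.sum_congr rfl fun e _ => ?_
      rw [zsmul_eq_mul, zsmul_eq_mul]
      push_cast
      ring
    -- RHS: column manipulation and Laplace expansion
    set P : Polynomial R := ∏ l : Fin (n+1), (Polynomial.X - Polynomial.C (A l)) with hP
    have hPmonic : P.Monic :=
      Polynomial.monic_prod_of_monic _ _ fun l _ => Polynomial.monic_X_sub_C (A l)
    have hPdeg : P.natDegree = n + 1 := by
      rw [hP, Polynomial.natDegree_prod_of_monic _ _ fun l _ => Polynomial.monic_X_sub_C (A l)]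
      simp [Polynomial.natDegree_X_sub_C, Polynomial.natDegree_X]
    have hPeval : ∀ t : R, P.eval t = ∏ l, (t - A l) := by
      intro t; simp [hP, Polynomial.eval_prod]
    have hPA : ∀ i, P.eval (A i) = 0 := fun i => by
      rw [hPeval]
      exact Finset.prod_eq_zero (Finset.mem_univ i) (by ring)
    have hExp : ∀ t : R, P.eval t
        = t^(n+1) + ∑ m ∈ Finset.range (n+1), P.coeff m * t^m := by
      intro t
      rw [Polynomial.eval_eq_sum_range, hPdeg, Finset.sum_range_succ]
      have hc : P.coeff (n+1) = 1 := by
        have := hPmonic.coeff_natDegree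
        rwa [hPdeg] at this
      rw [hc, one_mul, add_comm]
    set v : Fin (n+1) → R := fun i => - P.eval (B i) with hv
    have hvcol : v = fun i => N i (Fin.last n)
        + ∑ j : Fin n, P.coeff ((j:ℕ)+1) * N i ((j : Fin n).castSucc) := by
      funext i
      have h0 : v i = P.eval (A i) - P.eval (B i) := by rw [hPA]; ring
      have hsplit : ∑ m ∈ Finset.range (n+1), P.coeff m * A i ^ m
            - ∑ m ∈ Finset.range (n+1), P.coeff m * B i ^ m
          = ∑ j : Fin n, P.coeff ((j:ℕ)+1) * (A i ^ ((j:ℕ)+1) - B i ^ ((j:ℕ)+1)) := by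
        rw [← Finset.sum_sub_distrib, Finset.sum_range_succ']
        simp only [pow_zero, mul_one, sub_self, add_zero]
        rw [← Fin.sum_univ_eq_sum_range
          (fun m => P.coeff (m+1) * A i ^ (m+1) - P.coeff (m+1) * B i ^ (m+1)) n]
        refine Finset.sum_congr rfl fun j _ => ?_
        ring
      have hNentry : ∀ j : Fin n, N i ((j : Fin n).castSucc)
          = A i ^ ((j:ℕ)+1) - B i ^ ((j:ℕ)+1) := by
        intro j; simp [hN]
      have hNlast : N i (Fin.last n) = A i ^ (n+1) - B i ^ (n+1) := by
        simp [hN]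
      rw [h0, hExp (A i), hExp (B i), hNlast]
      simp only [hNentry]
      rw [← hsplit]
      ring
    have hdet1 : Matrix.det (N.updateCol (Fin.last n) v) = N.det := by
      rw [hvcol]
      have hgen : ∀ s : Finset (Fin n), Matrix.det (N.updateCol (Fin.last n)
          (fun i => N i (Fin.last n) + ∑ j ∈ s, P.coeff ((j:ℕ)+1) * N i (j.castSucc)))
          = N.det := by
        intro s
        induction s using Finset.induction_on with
        | empty => simp [Matrix.updateCol_eq_self]
        | @insert a s ha ih =>
          have hsplit : (fun i => N i (Fin.last n)
                + ∑ j ∈ insert a s, P.coeff ((j:ℕ)+1) * N i (j.castSucc))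
              = (fun i => N i (Fin.last n) + ∑ j ∈ s, P.coeff ((j:ℕ)+1) * N i (j.castSucc))
                + (P.coeff ((a:ℕ)+1) • fun i => N i (a.castSucc)) := by
            funext i
            simp only [Finset.sum_insert ha, Pi.add_apply, Pi.smul_apply, smul_eq_mul]
            ring
          rw [hsplit, Matrix.det_updateCol_add, Matrix.det_updateCol_smul, ih,
            Matrix.det_updateCol_eq_zero (Fin.castSucc_lt_last a).ne]
          ring
      exact hgen Finset.univ
    have hvk : ∀ k, v k = (-1:R)^n * ∏ l, (A l - B k) := by
      intro k
      have h1 : ∏ l : Fin (n+1), (B k - A l) = (-1:R)^(n+1) * ∏ l, (A l - B k) := by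
        calc ∏ l : Fin (n+1), (B k - A l) = ∏ l : Fin (n+1), (-1) * (A l - B k) := by
              refine Finset.prod_congr rfl fun l _ => by ring
          _ = (-1:R)^(n+1) * ∏ l, (A l - B k) := by
              rw [Finset.prod_mul_distrib, Finset.prod_const]
              simp
      simp only [hv]
      rw [hPeval, h1, pow_succ]
      ring
    have hdet2 : N.det = ∑ k : Fin (n+1), (-1 : R)^(k:ℕ) * ((∏ l, (A l - B k)) * (M k).det) := by
      rw [← hdet1, Matrix.det_succ_column _ (Fin.last n)]
      refine Finset.sum_congr rfl fun k _ => ?_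
      have hentry : (N.updateCol (Fin.last n) v) k (Fin.last n) = v k := by
        simp [Matrix.updateCol_self]
      have hsub : (N.updateCol (Fin.last n) v).submatrix k.succAbove (Fin.last n).succAbove
          = M k := by
        ext i j
        simp only [Fin.succAbove_last, Matrix.submatrix_apply, Matrix.updateCol_apply,
          (Fin.castSucc_lt_last j).ne, if_false, hN, hM, Matrix.of_apply, Fin.coe_castSucc]
      rw [hentry, hsub, hvk k]
      have h2 : (-1:R)^((k:ℕ)+(Fin.last n : ℕ)) = (-1:R)^(k:ℕ) * (-1:R)^n := by
        rw [pow_add, Fin.val_last]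
      rw [h2]
      have h3 : (-1:R)^n * (-1:R)^n = 1 := by
        rw [← mul_pow]; norm_num
      calc (-1:R)^(k:ℕ) * (-1:R)^n * ((-1:R)^n * ∏ l, (A l - B k)) * (M k).det
          = ((-1:R)^n * (-1:R)^n) * ((-1:R)^(k:ℕ) * ((∏ l, (A l - B k)) * (M k).det)) := by ring
        _ = (-1:R)^(k:ℕ) * ((∏ l, (A l - B k)) * (M k).det) := by rw [h3, one_mul]
    calc ∑ σ : Equiv.Perm (Fin (n+1)), (Equiv.Perm.sign σ : ℤ) •
          ∏ p : Fin (n+1), ∏ q ∈ Finset.Ici p, (A (σ q) - B (σ p))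
        = ∑ k : Fin (n+1), (-1 : R)^(k:ℕ) * ((∏ l, (A l - B k)) * D k) := hL
      _ = ∑ k : Fin (n+1), (-1 : R)^(k:ℕ) * ((∏ l, (A l - B k)) * (M k).det) :=
          Finset.sum_congr rfl fun k _ => by rw [hDM k]
      _ = N.det := hdet2.symm


/-- The bialternant identity of Section 7.2:
∑_σ sgn(σ) ∏_{1 ≤ p ≤ q ≤ n} (u X_{σ(q)} + v X_{σ(p)}⁻¹ + w)
  = det( (u X_i + w)^j − (−v X_i⁻¹)^j ). -/
theorem stmt1 {K : Type*} [Field K] (n : ℕ) (hn : 1 ≤ n) (u v w : K) (X : Fin n → K)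
    (hX : ∀ i, X i ≠ 0) :
    ∑ σ : Equiv.Perm (Fin n),
        (Equiv.Perm.sign σ : ℤ) •
          ∏ p : Fin n, ∏ q ∈ Finset.Ici p, (u * X (σ q) + v * (X (σ p))⁻¹ + w) =
      Matrix.det (Matrix.of fun i j : Fin n =>
        (u * X i + w) ^ ((j : ℕ) + 1) - (-(v * (X i)⁻¹)) ^ ((j : ℕ) + 1)) := by
  have h := key n (fun i => u * X i + w) (fun i => -(v * (X i)⁻¹))
  rw [← h]
  refine Finset.sum_congr rfl fun σ _ => ?_
  congr 1
  refine Finset.prod_congr rfl fun p _ => Finset.prod_congr rfl fun q _ => by ring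
end

section
/- Let n ≥ 1, let K be a field, let X₁,…,Xₙ be pairwise distinct elements of K, and let f₁,…,fₙ : K → K be arbitrary functions. Then det_{1≤i,j≤n}( f_j(X_i) ) = ∏_{1≤i<j≤n}(X_j − X_i) · det_{1≤i,j≤n}( ∑_{k=1}^{i} f_j(X_k) / ∏_{1≤l≤i, l≠k}(X_k − X_l) ). -/
/-- First assertion of Lemma 6.2: det(f_j(X_i)) equals the Vandermonde product times
the determinant of the matrix of divided differences f_j[X₁,…,X_i]. -/
theorem stmt2 {K : Type*} [Field K] (n : ℕ) (hn : 1 ≤ n) (X : Fin n → K)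
    (hX : Function.Injective X) (f : Fin n → K → K) :
    Matrix.det (Matrix.of fun i j : Fin n => f j (X i)) =
      (∏ i : Fin n, ∏ j ∈ Finset.Ioi i, (X j - X i)) *
        Matrix.det (Matrix.of fun i j : Fin n =>
          ∑ k ∈ Finset.Iic i, f j (X k) / ∏ l ∈ (Finset.Iic i).erase k, (X k - X l)) := by
  classical
  set M : Matrix (Fin n) (Fin n) K := Matrix.of fun i j : Fin n => f j (X i) with hM
  set C : Matrix (Fin n) (Fin n) K := Matrix.of fun i k : Fin n =>
    if k ∈ Finset.Iic i then (∏ l ∈ (Finset.Iic i).erase k, (X k - X l))⁻¹ else 0 with hC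
  have hCM : (Matrix.of fun i j : Fin n =>
      ∑ k ∈ Finset.Iic i, f j (X k) / ∏ l ∈ (Finset.Iic i).erase k, (X k - X l)) = C * M := by
    ext i j
    simp only [Matrix.mul_apply, Matrix.of_apply, hC, hM, ite_mul, zero_mul]
    rw [Finset.sum_ite_mem, Finset.univ_inter]
    exact Finset.sum_congr rfl fun k _ => by rw [div_eq_mul_inv, mul_comm]
  have hCtri : C.BlockTriangular OrderDual.toDual := by
    intro i k h
    simp only [hC, Matrix.of_apply]
    rw [if_neg]
    simpa using not_le.mpr h
  have hdetC : C.det = ∏ i : Fin n, (∏ l ∈ Finset.Iio i, (X i - X l))⁻¹ := by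
    rw [Matrix.det_of_lowerTriangular C hCtri]
    refine Finset.prod_congr rfl fun i _ => ?_
    simp only [hC, Matrix.of_apply, if_pos (Finset.mem_Iic.mpr le_rfl), Finset.Iic_erase]
  have hV : (∏ i : Fin n, ∏ j ∈ Finset.Ioi i, (X j - X i)) =
      ∏ i : Fin n, ∏ l ∈ Finset.Iio i, (X i - X l) := by
    rw [Finset.prod_comm' (t' := Finset.univ) (s' := fun j => Finset.Iio j)]
    intro x y
    simp [Finset.mem_Ioi, Finset.mem_Iio]
  have hne : ∀ i : Fin n, (∏ l ∈ Finset.Iio i, (X i - X l)) ≠ 0 := by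
    intro i
    refine Finset.prod_ne_zero_iff.mpr fun l hl => sub_ne_zero_of_ne fun h => ?_
    exact absurd (hX h).symm (ne_of_lt (Finset.mem_Iio.mp hl))
  rw [hCM, Matrix.det_mul, hdetC, hV, ← mul_assoc, ← Finset.prod_mul_distrib,
    Finset.prod_congr rfl (fun i _ => mul_inv_cancel₀ (hne i)), Finset.prod_const_one, one_mul]
end

section
/- Let n ≥ 1, let R be a commutative ring, let X₁,…,Xₙ ∈ R, and let i, j ≥ 1 be integers. Then e_{i+j−1}(X₁,…,Xₙ) = ∑_{k=1}^{n} e_{i−1}(X₁,…,X_{n−k}) · X_{n−k+1} · e_{j−1}(X_{n−k+2},…,Xₙ). -/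
/-- The elementary symmetric polynomial of degree `k` in the variables given by the list `l`. -/
def ee {R : Type*} [CommSemiring R] (k : ℕ) (l : List R) : R :=
  ∑ s ∈ Finset.powersetCard k (Finset.univ : Finset (Fin l.length)), ∏ i ∈ s, l.get i

/-- The list of variables X_a, X_{a+1}, …, X_b (empty if a > b). -/
def seg {R : Type*} (X : ℕ → R) (a b : ℕ) : List R :=
  (List.range (b + 1 - a)).map fun t => X (a + t)

lemma esymm_cons {R : Type*} [CommSemiring R] (a : R) (s : Multiset R) (n : ℕ) :
    (a ::ₘ s).esymm (n + 1) = s.esymm (n + 1) + a * s.esymm n := by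
  rw [Multiset.esymm, Multiset.powersetCard_cons, Multiset.map_add, Multiset.sum_add,
    Multiset.map_map]
  congr 1
  rw [Multiset.esymm, ← Multiset.sum_map_mul_left]
  congr 1
  apply Multiset.map_congr rfl
  intro t _
  simp [Multiset.prod_cons]

lemma ee_eq_esymm {R : Type*} [CommSemiring R] (k : ℕ) (l : List R) :
    ee k l = (l : Multiset R).esymm k := by
  rw [ee, ← Finset.esymm_map_val]
  congr 1
  show ((List.finRange l.length : Multiset (Fin l.length)).map l.get) = _
  rw [Multiset.map_coe, List.map_get_finRange]

lemma ee_zero {R : Type*} [CommSemiring R] (l : List R) : ee 0 l = 1 := by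
  simp [ee]

lemma ee_nil {R : Type*} [CommSemiring R] (k : ℕ) : ee (k + 1) ([] : List R) = 0 := by
  simp [ee_eq_esymm, Multiset.esymm, Multiset.powersetCard_zero_right]

lemma ee_append_singleton {R : Type*} [CommSemiring R] (k : ℕ) (l : List R) (x : R) :
    ee (k + 1) (l ++ [x]) = ee (k + 1) l + x * ee k l := by
  simp only [ee_eq_esymm]
  have : ((l ++ [x] : List R) : Multiset R) = x ::ₘ (l : Multiset R) := by
    simp [Multiset.cons_swap]
  rw [this, esymm_cons]

lemma seg_succ {R : Type*} (X : ℕ → R) (a b : ℕ) (h : a ≤ b + 1) :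
    seg X a (b + 1) = seg X a b ++ [X (b + 1)] := by
  have h1 : b + 1 + 1 - a = (b + 1 - a) + 1 := by omega
  rw [seg, h1, List.range_succ, List.map_append, seg]
  congr 1
  simp only [List.map_cons, List.map_nil]
  congr 2
  omega

lemma seg_empty {R : Type*} (X : ℕ → R) (a b : ℕ) (h : b + 1 ≤ a) : seg X a b = [] := by
  rw [seg]
  have : b + 1 - a = 0 := by omega
  simp [this]

lemma aux {R : Type*} [CommRing R] (X : ℕ → R) (n a b : ℕ) :
    ee (a + b + 1) (seg X 1 n) =
      ∑ k ∈ Finset.range n,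
        ee a (seg X 1 (n - 1 - k)) * X (n - k) * ee b (seg X (n + 1 - k) n) := by
  induction n generalizing a b with
  | zero => simp [seg_empty X 1 0 (by omega), ee_nil]
  | succ n ih =>
    rw [seg_succ X 1 n (by omega), ee_append_singleton, Finset.sum_range_succ']
    have h0 : ee a (seg X 1 (n + 1 - 1 - 0)) * X (n + 1 - 0) * ee b (seg X (n + 1 + 1 - 0) (n + 1))
        = ee a (seg X 1 n) * X (n + 1) * ee b [] := by
      rw [seg_empty X (n + 1 + 1 - 0) (n + 1) (by omega)]
      norm_num
    rw [h0]
    have hterm : ∀ k ∈ Finset.range n,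
        ee a (seg X 1 (n + 1 - 1 - (k + 1))) * X (n + 1 - (k + 1)) *
          ee b (seg X (n + 1 + 1 - (k + 1)) (n + 1)) =
        ee a (seg X 1 (n - 1 - k)) * X (n - k) *
          ee b (seg X (n + 1 - k) n ++ [X (n + 1)]) := by
      intro k hk
      simp only [Finset.mem_range] at hk
      have e1 : n + 1 - 1 - (k + 1) = n - 1 - k := by omega
      have e2 : n + 1 - (k + 1) = n - k := by omega
      have e3 : n + 1 + 1 - (k + 1) = n + 1 - k := by omega
      rw [e1, e2, e3, seg_succ X (n + 1 - k) n (by omega)]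
    rw [Finset.sum_congr rfl hterm]
    cases b with
    | zero =>
      simp only [ee_zero, mul_one, Nat.add_zero]
      rw [ih a 0]
      simp only [ee_zero, mul_one]
      ring
    | succ c =>
      simp only [ee_append_singleton c]
      have : ∀ k ∈ Finset.range n,
          ee a (seg X 1 (n - 1 - k)) * X (n - k) *
            (ee (c + 1) (seg X (n + 1 - k) n) + X (n + 1) * ee c (seg X (n + 1 - k) n)) =
          ee a (seg X 1 (n - 1 - k)) * X (n - k) * ee (c + 1) (seg X (n + 1 - k) n) +
          X (n + 1) * (ee a (seg X 1 (n - 1 - k)) * X (n - k) * ee c (seg X (n + 1 - k) n)) := by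
        intro k _; ring
      rw [Finset.sum_congr rfl this, Finset.sum_add_distrib, ← Finset.mul_sum,
        ← ih a (c + 1), ← ih a c, ee_nil]
      have e4 : a + (c + 1) + 1 = (a + c + 1) + 1 := by omega
      have e5 : a + (c + 1) = a + c + 1 := by omega
      rw [e4, e5]
      ring

/-- The matrix factorization claim of Section 7.4:
e_{i+j−1}(X₁,…,Xₙ) = ∑_{k=1}^{n} e_{i−1}(X₁,…,X_{n−k}) X_{n−k+1} e_{j−1}(X_{n−k+2},…,Xₙ). -/
theorem stmt9 {R : Type*} [CommRing R] (n : ℕ) (hn : 1 ≤ n) (X : ℕ → R) (i j : ℕ)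
    (hi : 1 ≤ i) (hj : 1 ≤ j) :
    ee (i + j - 1) (seg X 1 n) =
      ∑ k ∈ Finset.Icc 1 n,
        ee (i - 1) (seg X 1 (n - k)) * X (n + 1 - k) * ee (j - 1) (seg X (n + 2 - k) n) := by
  obtain ⟨a, rfl⟩ : ∃ a, i = a + 1 := ⟨i - 1, by omega⟩
  obtain ⟨b, rfl⟩ : ∃ b, j = b + 1 := ⟨j - 1, by omega⟩
  have hI : Finset.Icc 1 n = Finset.Ico 1 (n + 1) := by
    rw [Finset.Ico_add_one_right_eq_Icc]
  rw [hI, Finset.sum_Ico_eq_sum_range]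
  have e0 : a + 1 + (b + 1) - 1 = a + b + 1 := by omega
  rw [e0, aux X n a b]
  apply Finset.sum_congr (by simp) 
  intro k hk
  simp only [Finset.mem_range] at hk
  have e1 : n - (1 + k) = n - 1 - k := by omega
  have e2 : n + 1 - (1 + k) = n - k := by omega
  have e3 : n + 2 - (1 + k) = n + 1 - k := by omega
  simp only [Nat.add_sub_cancel, e1, e2, e3]
end

section
/- Let n ≥ 1, let R be a commutative ring, let X₁,…,Xₙ ∈ R, let 1 ≤ i ≤ n and let j ≥ 0 be an integer. Then ∑_{k=1}^{n} (−1)^{k−1} · e_{k−1}(X_{n−i+2},…,Xₙ) · h_{j−k+1}(X₁,…,Xₙ) = h_j(X₁,…,X_{n−i+1}). -/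
/-- The complete homogeneous symmetric polynomial of degree `k` in the variables given by the
list `l`: the sum of all monomials of total degree `k`. -/
def hh {R : Type*} [CommSemiring R] (k : ℕ) (l : List R) : R :=
  ∑ a ∈ Finset.Nat.antidiagonalTuple l.length k, ∏ i : Fin l.length, l.get i ^ a i

/-- The complete homogeneous symmetric function of integer degree `k`, equal to `0` for
negative `k`. -/
def hZ {R : Type*} [CommSemiring R] (k : ℤ) (l : List R) : R :=
  if 0 ≤ k then hh k.toNat l else 0

section Aux
variable {R : Type*} [CommSemiring R]

lemma hh_zero (l : List R) : hh 0 l = 1 := by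
  simp [hh, Finset.Nat.antidiagonalTuple_zero_right]

lemma hh_nil_succ (k : ℕ) : hh (k+1) ([] : List R) = 0 := by
  simp [hh, Finset.Nat.antidiagonalTuple_zero_succ]

lemma hh_cons_sum (k : ℕ) (y : R) (l : List R) :
    hh k (y :: l) = ∑ m ∈ Finset.range (k+1), y ^ m * hh (k - m) l := by
  classical
  have : ∑ m ∈ Finset.range (k+1), y ^ m * hh (k - m) l
      = ∑ p ∈ (Finset.range (k+1)).sigma
          (fun m => Finset.Nat.antidiagonalTuple l.length (k-m)),
          y ^ p.1 * ∏ i : Fin l.length, l.get i ^ p.2 i := by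
    rw [Finset.sum_sigma]
    exact Finset.sum_congr rfl fun m _ => by rw [hh, Finset.mul_sum]
  rw [this]
  unfold hh
  simp only [List.length_cons]
  refine Finset.sum_nbij' (i := fun a => (⟨a 0, Fin.tail a⟩ : Σ _ : ℕ, (Fin l.length → ℕ)))
    (j := fun p => Fin.cons p.1 p.2) ?_ ?_ ?_ ?_ ?_
  · intro a ha
    rw [Finset.Nat.mem_antidiagonalTuple, Fin.sum_univ_succ] at ha
    rw [Finset.mem_sigma, Finset.mem_range, Finset.Nat.mem_antidiagonalTuple]
    show a 0 < k + 1 ∧ ∑ i : Fin l.length, Fin.tail a i = k - a 0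
    have htail : (∑ i : Fin l.length, Fin.tail a i) = ∑ i : Fin l.length, a i.succ := rfl
    rw [htail]
    generalize hS : (∑ i : Fin l.length, a i.succ) = S at ha ⊢
    exact ⟨by omega, by omega⟩
  · intro p hp
    rw [Finset.mem_sigma, Finset.mem_range, Finset.Nat.mem_antidiagonalTuple] at hp
    rw [Finset.Nat.mem_antidiagonalTuple, Fin.sum_univ_succ]
    simp only [Fin.cons_zero, Fin.cons_succ]
    generalize hS : (∑ i : Fin l.length, p.2 i) = S at hp ⊢
    omega
  · intro a _; exact Fin.cons_self_tail a
  · intro p _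
    refine Sigma.ext ?_ ?_
    · simp
    · simp [Fin.tail_cons]
  · intro a _
    rw [Fin.prod_univ_succ]
    simp [Fin.tail]

lemma hh_cons_rec (k : ℕ) (y : R) (l : List R) :
    hh (k+1) (y :: l) = hh (k+1) l + y * hh k (y :: l) := by
  rw [hh_cons_sum, Finset.sum_range_succ' _ (k+1), hh_cons_sum, Finset.mul_sum]
  simp only [pow_zero, one_mul, Nat.sub_zero, pow_succ]
  rw [add_comm]
  congr 1
  refine Finset.sum_congr rfl fun m hm => ?_
  rw [Finset.mem_range] at hm
  have : k + 1 - (m + 1) = k - m := by omega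
  rw [this]; ring

lemma hh_singleton (k : ℕ) (y : R) : hh k [y] = y ^ k := by
  rw [hh_cons_sum]
  rw [Finset.sum_eq_single k]
  · simp [hh_zero]
  · intro m hm hne
    rw [Finset.mem_range] at hm
    have : k - m = (k - m - 1) + 1 := by omega
    rw [this, hh_nil_succ, mul_zero]
  · intro h; exact absurd (Finset.self_mem_range_succ k) h

lemma esymm_zero' (m : Multiset R) : m.esymm 0 = 1 := by
  simp [Multiset.esymm]

lemma esymm_cons_s10 (y : R) (m : Multiset R) (k : ℕ) :
    (y ::ₘ m).esymm (k+1) = m.esymm (k+1) + y * m.esymm k := by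
  rw [Multiset.esymm, Multiset.powersetCard_cons, Multiset.map_add, Multiset.sum_add,
    Multiset.map_map]
  congr 1
  rw [Multiset.esymm, ← Multiset.sum_map_mul_left]
  congr 1
  refine Multiset.map_congr rfl fun t _ => ?_
  simp [Multiset.prod_cons]

lemma esymm_of_card_lt {m : Multiset R} {k : ℕ} (h : Multiset.card m < k) :
    m.esymm k = 0 := by
  rw [Multiset.esymm, Multiset.powersetCard_eq_empty _ h]
  simp

lemma ee_eq (k : ℕ) (l : List R) : ee k l = Multiset.esymm (↑l) k := by
  have h1 : ((l : Multiset R)) = (Finset.univ.val.map l.get) := by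
    rw [Fin.univ_val_map, List.ofFn_get]
  rw [h1, Finset.esymm_map_val]
  rfl

end Aux

section AuxRing
variable {R : Type*} [CommRing R]

lemma hh_snoc_rec (k : ℕ) (y : R) :
    ∀ A : List R, hh (k+1) (A ++ [y]) = hh (k+1) A + y * hh k (A ++ [y]) := by
  induction k with
  | zero =>
    intro A
    induction A with
    | nil => simp [hh_singleton, hh_nil_succ, hh_zero]
    | cons x A' ih =>
      have e1 : hh 1 (x :: (A' ++ [y])) = hh 1 (A' ++ [y]) + x * hh 0 (x :: (A' ++ [y])) :=
        hh_cons_rec 0 x (A' ++ [y])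
      have e4 : hh 1 (x :: A') = hh 1 A' + x * hh 0 (x :: A') := hh_cons_rec 0 x A'
      show hh 1 (x :: (A' ++ [y])) = hh 1 (x :: A') + y * hh 0 (x :: (A' ++ [y]))
      simp only [hh_zero] at *
      linear_combination e1 + ih - e4
  | succ k ihk =>
    intro A
    induction A with
    | nil => simp [hh_singleton, hh_nil_succ, pow_succ]; ring
    | cons x A' ih =>
      have e1 : hh (k+2) (x :: (A' ++ [y])) = hh (k+2) (A' ++ [y]) + x * hh (k+1) (x :: (A' ++ [y])) :=
        hh_cons_rec (k+1) x (A' ++ [y])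
      have e3 : hh (k+1) (x :: (A' ++ [y])) = hh (k+1) (x :: A') + y * hh k (x :: (A' ++ [y])) :=
        ihk (x :: A')
      have e4 : hh (k+2) (x :: A') = hh (k+2) A' + x * hh (k+1) (x :: A') := hh_cons_rec (k+1) x A'
      have e5 : hh (k+1) (x :: (A' ++ [y])) = hh (k+1) (A' ++ [y]) + x * hh k (x :: (A' ++ [y])) :=
        hh_cons_rec k x (A' ++ [y])
      show hh (k+2) (x :: (A' ++ [y])) = hh (k+2) (x :: A') + y * hh (k+1) (x :: (A' ++ [y]))
      linear_combination e1 + ih + x * e3 - e4 - y * e5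

lemma hZ_neg {j : ℤ} (hj : j < 0) (l : List R) : hZ j l = 0 := if_neg (by omega)

lemma hZ_ofNat (m : ℕ) (l : List R) : hZ (m : ℤ) l = hh m l := by
  simp [hZ]

lemma hZ_snoc (j : ℤ) (y : R) (A : List R) :
    hZ j (A ++ [y]) = hZ j A + y * hZ (j - 1) (A ++ [y]) := by
  rcases lt_trichotomy j 0 with h | h | h
  · rw [hZ_neg h, hZ_neg h, hZ_neg (show j - 1 < 0 by omega), mul_zero, add_zero]
  · subst h
    have h1 : ∀ l : List R, hZ (0 : ℤ) l = 1 := fun l => by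
      rw [hZ]; simp [hh_zero]
    rw [h1, h1, hZ_neg (show (0 : ℤ) - 1 < 0 by norm_num), mul_zero, add_zero]
  · obtain ⟨m, rfl⟩ : ∃ m : ℕ, j = ((m : ℤ) + 1) := ⟨(j - 1).toNat, by omega⟩
    rw [show ((m : ℤ) + 1 - 1) = (m : ℤ) by ring,
      show ((m : ℤ) + 1) = (((m + 1 : ℕ)) : ℤ) by push_cast; ring,
      hZ_ofNat, hZ_ofNat, hZ_ofNat]
    exact hh_snoc_rec m y A

lemma key_s10 (B : List R) : ∀ (A : List R) (j : ℤ),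
    ∑ k ∈ Finset.range (B.length + 1),
      (-1 : R) ^ k * Multiset.esymm (↑B) k * hZ (j - k) (A ++ B) = hZ j A := by
  induction B with
  | nil =>
    intro A j
    rw [List.length_nil, Finset.sum_range_one]
    simp [esymm_zero']
  | cons y B' ih =>
    intro A j
    have hsnoc := hZ_snoc j y A
    have hIHj := ih (A ++ [y]) j
    have hIHj1 := ih (A ++ [y]) (j - 1)
    rw [List.append_assoc, List.singleton_append] at hIHj hIHj1
    have hcoe : ((y :: B' : List R) : Multiset R) = y ::ₘ (↑B' : Multiset R) := rfl
    show ∑ k ∈ Finset.range (B'.length + 1 + 1),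
        (-1 : R) ^ k * Multiset.esymm (↑(y :: B')) k * hZ (j - k) (A ++ y :: B') = hZ j A
    rw [Finset.sum_range_succ']
    have h0 : (-1 : R) ^ 0 * Multiset.esymm (↑(y :: B')) 0 * hZ (j - ((0 : ℕ) : ℤ)) (A ++ y :: B')
        = hZ j (A ++ y :: B') := by
      simp [esymm_zero']
    rw [h0]
    have hsplit : ∀ k ∈ Finset.range (B'.length + 1),
        (-1 : R) ^ (k + 1) * Multiset.esymm (↑(y :: B')) (k + 1) * hZ (j - ((k + 1 : ℕ) : ℤ)) (A ++ y :: B')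
          = -((-1 : R) ^ k * Multiset.esymm (↑B') (k + 1) * hZ (j - 1 - k) (A ++ y :: B'))
            - y * ((-1 : R) ^ k * Multiset.esymm (↑B') k * hZ (j - 1 - k) (A ++ y :: B')) := by
      intro k _
      rw [show (j - ((k + 1 : ℕ) : ℤ)) = j - 1 - (k : ℤ) by push_cast; ring, hcoe, esymm_cons_s10]
      ring
    rw [Finset.sum_congr rfl hsplit, Finset.sum_sub_distrib, Finset.sum_neg_distrib,
      ← Finset.mul_sum]
    have hS2 : ∑ k ∈ Finset.range (B'.length + 1),
        (-1 : R) ^ k * Multiset.esymm (↑B') (k + 1) * hZ (j - 1 - k) (A ++ y :: B')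
          = hZ j (A ++ y :: B') - hZ j (A ++ [y]) := by
      rw [Finset.sum_range_succ, esymm_of_card_lt (m := (↑B' : Multiset R)) (by simp),
        mul_zero, zero_mul, add_zero]
      rw [Finset.sum_range_succ'] at hIHj
      have hsh : ∀ k ∈ Finset.range B'.length,
          (-1 : R) ^ (k + 1) * Multiset.esymm (↑B') (k + 1) * hZ (j - ((k + 1 : ℕ) : ℤ)) (A ++ y :: B')
            = -((-1 : R) ^ k * Multiset.esymm (↑B') (k + 1) * hZ (j - 1 - k) (A ++ y :: B')) := by
        intro k _
        rw [show (j - ((k + 1 : ℕ) : ℤ)) = j - 1 - (k : ℤ) by push_cast; ring]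
        ring
      rw [Finset.sum_congr rfl hsh, Finset.sum_neg_distrib] at hIHj
      simp only [pow_zero, esymm_zero', one_mul, Nat.cast_zero, sub_zero] at hIHj
      linear_combination -hIHj
    rw [hS2, hIHj1]
    linear_combination hsnoc

omit [CommRing R] in
lemma seg_append (X : ℕ → R) (a b c : ℕ) (hab : a ≤ b + 1) (hbc : b ≤ c) :
    seg X a b ++ seg X (b + 1) c = seg X a c := by
  unfold seg
  rw [show c + 1 - a = (b + 1 - a) + (c + 1 - (b + 1)) by omega, List.range_add,
    List.map_append, List.map_map]
  congr 1
  refine List.map_congr_left fun t _ => ?_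
  show X (b + 1 + t) = X (a + (b + 1 - a + t))
  congr 1
  omega

omit [CommRing R] in
lemma seg_length (X : ℕ → R) (a b : ℕ) : (seg X a b).length = b + 1 - a := by
  simp [seg]

end AuxRing

/-- The entry simplification of Section 7.4:
∑_{k=1}^{n} (−1)^{k−1} e_{k−1}(X_{n−i+2},…,Xₙ) h_{j−k+1}(X₁,…,Xₙ) = h_j(X₁,…,X_{n−i+1}). -/
theorem stmt10 {R : Type*} [CommRing R] (n : ℕ) (hn : 1 ≤ n) (X : ℕ → R) (i : ℕ)
    (hi1 : 1 ≤ i) (hin : i ≤ n) (j : ℕ) :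
    ∑ k ∈ Finset.Icc 1 n,
        (-1 : R) ^ (k - 1) * ee (k - 1) (seg X (n + 2 - i) n) *
          hZ ((j : ℤ) - k + 1) (seg X 1 n) =
      hh j (seg X 1 (n + 1 - i)) := by
  set B := seg X (n + 2 - i) n with hB
  set A := seg X 1 (n + 1 - i) with hA
  have hAB : A ++ B = seg X 1 n := by
    rw [hA, hB, show n + 2 - i = (n + 1 - i) + 1 by omega]
    exact seg_append X 1 (n + 1 - i) n (by omega) (by omega)
  have hBlen : B.length = i - 1 := by
    rw [hB, seg_length]; omega
  have hkey := key_s10 B A (j : ℤ)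
  rw [← Finset.Ico_add_one_right_eq_Icc, Finset.sum_Ico_eq_sum_range]
  simp only [Nat.succ_sub_one, Nat.add_sub_cancel]
  have hterm : ∀ k ∈ Finset.range n,
      (-1 : R) ^ (1 + k - 1) * ee (1 + k - 1) B * hZ ((j : ℤ) - ((1 + k : ℕ) : ℤ) + 1) (seg X 1 n)
        = (-1 : R) ^ k * Multiset.esymm (↑B) k * hZ ((j : ℤ) - k) (A ++ B) := by
    intro k _
    rw [show 1 + k - 1 = k by omega, ee_eq,
      show ((j : ℤ) - ((1 + k : ℕ) : ℤ) + 1) = (j : ℤ) - k by push_cast; ring, hAB]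
  rw [Finset.sum_congr rfl hterm, show hh j A = hZ ((j : ℕ) : ℤ) A from (hZ_ofNat j A).symm,
    ← hkey]
  refine (Finset.sum_subset ?_ ?_).symm
  · intro k hk
    rw [Finset.mem_range] at *
    omega
  · intro k _ hk
    rw [Finset.mem_range, hBlen] at hk
    rw [esymm_of_card_lt (show Multiset.card (↑B : Multiset R) < k by
      rw [Multiset.coe_card, hBlen]; omega), mul_zero, zero_mul]
end

section
/- Let n ≥ 1, let R be a commutative ring, let a₁,…,aₙ, b₁,…,bₙ, t ∈ R. Then det_{1≤i,j≤n}( a_i^j − b_i^j ) = det_{1≤i,j≤n}( (a_i + t)^{j−1}·a_i − (b_i + t)^{j−1}·b_i ). -/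
/-- The elementary-column-operation identity underlying equation (lr) in Section 7.3:
det(a_i^j − b_i^j) = det((a_i+t)^{j−1} a_i − (b_i+t)^{j−1} b_i). -/
theorem stmt12 {R : Type*} [CommRing R] (n : ℕ) (hn : 1 ≤ n) (a b : Fin n → R) (t : R) :
    Matrix.det (Matrix.of fun i j : Fin n => a i ^ ((j : ℕ) + 1) - b i ^ ((j : ℕ) + 1)) =
      Matrix.det (Matrix.of fun i j : Fin n =>
        (a i + t) ^ (j : ℕ) * a i - (b i + t) ^ (j : ℕ) * b i) := by
  set U : Matrix (Fin n) (Fin n) R := Matrix.of fun k j : Fin n =>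
    if (k : ℕ) ≤ (j : ℕ) then ((j : ℕ).choose (k : ℕ) : R) * t ^ ((j : ℕ) - (k : ℕ)) else 0
    with hU
  have key : ∀ (x : R) (j : Fin n),
      (x + t) ^ (j : ℕ) * x =
        ∑ k : Fin n, x ^ ((k : ℕ) + 1) *
          (if (k : ℕ) ≤ (j : ℕ) then ((j : ℕ).choose (k : ℕ) : R) * t ^ ((j : ℕ) - (k : ℕ)) else 0) := by
    intro x j
    rw [add_pow, Finset.sum_mul]
    rw [Fin.sum_univ_eq_sum_range (fun k => x ^ (k + 1) *
      (if k ≤ (j : ℕ) then ((j : ℕ).choose k : R) * t ^ ((j : ℕ) - k) else 0)) n]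
    rw [Finset.sum_subset (Finset.range_subset_range.mpr j.isLt)
      (fun k _ hk => by
        have hj : (j : ℕ) < k := Nat.lt_of_succ_le (Nat.le_of_not_lt
          (fun h => hk (Finset.mem_range.mpr h)))
        simp [Nat.choose_eq_zero_of_lt hj])]
    apply Finset.sum_congr rfl
    intro k hk
    by_cases hk' : k ≤ (j : ℕ)
    · simp only [if_pos hk']; ring
    · simp [hk', Nat.choose_eq_zero_of_lt (Nat.lt_of_not_le hk')]
  have hmul : (Matrix.of fun i j : Fin n =>
      (a i + t) ^ (j : ℕ) * a i - (b i + t) ^ (j : ℕ) * b i) =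
      (Matrix.of fun i j : Fin n => a i ^ ((j : ℕ) + 1) - b i ^ ((j : ℕ) + 1)) * U := by
    ext i j
    simp only [hU, Matrix.mul_apply, Matrix.of_apply, sub_mul, Finset.sum_sub_distrib]
    rw [key (a i) j, key (b i) j]
  have hUdet : U.det = 1 := by
    rw [Matrix.det_of_upperTriangular]
    · simp [hU, Matrix.of_apply, Nat.choose_self]
    · intro i j hij
      have h2 : ¬ (i : ℕ) ≤ (j : ℕ) := Nat.not_le.mpr hij
      rw [hU]
      exact if_neg h2
  rw [hmul, Matrix.det_mul, hUdet, mul_one]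
end
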